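/- Let 0 < a < b, Δ > 0, and set α = a·Δ, β = b·Δ. Define g_m(x) = (1/(2(b − a))) · ∫_a^b t·exp(−t·|x − m|) dt, the compound Laplace density whose inverse scale parameter is uniformly distributed on [a, b]. Then for all m, m' ∈ ℝ with |m − m'| ≤ Δ and every measurable S ⊆ ℝ, ∫_S g_m(x) dx ≤ R · ∫_S g_{m'}(x) dx, where R = (β² − α²) / ( 2·( (1 + α)·exp(−α) − (1 + β)·exp(−β) ) ). That is, the R²DP Laplace mechanism with uniformly distributed reciprocal scale satisfies ln(R)-differential privacy. -/

import Mathlib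

open MeasureTheory Real intervalIntegral Set

noncomputable def hh (a b s : ℝ) : ℝ := ∫ t in a..b, t * Real.exp (-t * s)

lemma ii (a b s : ℝ) : IntervalIntegrable (fun t => t * Real.exp (-t * s)) volume a b :=
  (by continuity : Continuous fun t : ℝ => t * Real.exp (-t * s)).intervalIntegrable _ _

lemma hh_pos {a b : ℝ} (ha : 0 < a) (hab : a < b) (s : ℝ) : 0 < hh a b s := by
  apply intervalIntegral.intervalIntegral_pos_of_pos_on (ii a b s) ?_ hab
  intro t ht
  have h1 : 0 < t := lt_trans ha ht.1
  positivity

lemma hh_anti {a b : ℝ} (ha : 0 < a) (hab : a ≤ b) {s s' : ℝ} (hs : s ≤ s') :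
    hh a b s' ≤ hh a b s := by
  apply intervalIntegral.integral_mono_on hab (ii a b s') (ii a b s)
  intro t ht
  have ht0 : 0 < t := lt_of_lt_of_le ha ht.1
  have := Real.exp_le_exp.2 (by nlinarith : -t * s' ≤ -t * s)
  nlinarith [Real.exp_pos (-t*s')]

lemma hh_zero {a b : ℝ} : hh a b 0 = (b^2 - a^2)/2 := by
  simp [hh, integral_id]

lemma hh_closed {a b c : ℝ} (hc : c ≠ 0) :
    hh a b c = ((1 + a*c) * Real.exp (-(a*c)) - (1 + b*c) * Real.exp (-(b*c))) / c^2 := by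
  have hd : ∀ t : ℝ, HasDerivAt (fun t => -((1 + t*c) * Real.exp (-(t*c))) / c^2)
      (t * Real.exp (-t * c)) t := by
    intro t
    have d1 : HasDerivAt (fun t : ℝ => 1 + t*c) c t := by
      simpa using ((hasDerivAt_id t).mul_const c).const_add 1
    have d2 : HasDerivAt (fun t : ℝ => Real.exp (-(t*c))) (-c * Real.exp (-(t*c))) t := by
      have := (((hasDerivAt_id t).mul_const c).neg).exp
      simpa [mul_comm] using this
    have := ((d1.mul d2).neg).div_const (c^2)
    convert this using 1
    case e'_4 => rfl
    case e'_5 => rfl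
    case e'_8 => rfl
    rw [show -t * c = -(t*c) by ring]
    field_simp
    ring
  rw [hh, intervalIntegral.integral_eq_sub_of_hasDerivAt (fun t _ => hd t) (ii a b c)]
  ring

lemma int_mul_const (a b c K : ℝ) :
    ∫ t in a..b, (t * Real.exp (-t*c)) * K = hh a b c * K := by
  rw [intervalIntegral.integral_mul_const]; rfl

lemma hh_key {a b : ℝ} (ha : 0 < a) (hab : a < b) {s d : ℝ} (hs : 0 ≤ s) (hd : 0 ≤ d) :
    hh a b s * hh a b d ≤ hh a b 0 * hh a b (s + d) := by
  have e1 : ∀ x : ℝ, Real.exp (-x*(s+d)) = Real.exp (-x*s) * Real.exp (-x*d) := by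
    intro x; rw [← Real.exp_add]; ring_nf
  have J : ∀ c K : ℝ, IntervalIntegrable (fun u => (u * Real.exp (-u*c)) * K) volume a b :=
    fun c K => (ii a b c).mul_const K
  -- inner integral computation
  have inner : ∀ t : ℝ,
      (∫ u in a..b, (t*u) * ((Real.exp (-t*s) - Real.exp (-u*s)) *
        (Real.exp (-t*d) - Real.exp (-u*d))))
      = (t * Real.exp (-t*(s+d))) * hh a b 0 - (t * Real.exp (-t*s)) * hh a b d
        - (t * Real.exp (-t*d)) * hh a b s + (t * Real.exp (-t*0)) * hh a b (s+d) := by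
    intro t
    have hEq : ∀ u : ℝ, (t*u) * ((Real.exp (-t*s) - Real.exp (-u*s)) *
        (Real.exp (-t*d) - Real.exp (-u*d)))
        = (u * Real.exp (-u*0)) * (t * Real.exp (-t*(s+d)))
          - (u * Real.exp (-u*d)) * (t * Real.exp (-t*s))
          - (u * Real.exp (-u*s)) * (t * Real.exp (-t*d))
          + (u * Real.exp (-u*(s+d))) * (t * Real.exp (-t*0)) := by
      intro u
      simp only [e1, mul_zero, neg_zero, zero_mul, Real.exp_zero]
      ring
    rw [intervalIntegral.integral_congr (fun u _ => hEq u),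
      intervalIntegral.integral_add (((J 0 _).sub (J d _)).sub (J s _)) (J (s+d) _),
      intervalIntegral.integral_sub ((J 0 _).sub (J d _)) (J s _),
      intervalIntegral.integral_sub (J 0 _) (J d _),
      int_mul_const, int_mul_const, int_mul_const, int_mul_const]
    ring
  -- nonnegativity of the inner integral for t in [a,b]
  have hGnn : ∀ t ∈ Icc a b, 0 ≤ (t * Real.exp (-t*(s+d))) * hh a b 0
      - (t * Real.exp (-t*s)) * hh a b d - (t * Real.exp (-t*d)) * hh a b s
      + (t * Real.exp (-t*0)) * hh a b (s+d) := by
    intro t htt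
    rw [← inner t]
    apply intervalIntegral.integral_nonneg hab.le
    intro u hu
    have ht0 : 0 < t := lt_of_lt_of_le ha htt.1
    have hu0 : 0 < u := lt_of_lt_of_le ha hu.1
    have htu : 0 ≤ t * u := by positivity
    rcases le_total t u with h | h
    · have f1 : Real.exp (-u*s) ≤ Real.exp (-t*s) := Real.exp_le_exp.2 (by nlinarith)
      have f2 : Real.exp (-u*d) ≤ Real.exp (-t*d) := Real.exp_le_exp.2 (by nlinarith)
      exact mul_nonneg htu (mul_nonneg (sub_nonneg.2 f1) (sub_nonneg.2 f2))
    · have f1 : Real.exp (-t*s) ≤ Real.exp (-u*s) := Real.exp_le_exp.2 (by nlinarith)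
      have f2 : Real.exp (-t*d) ≤ Real.exp (-u*d) := Real.exp_le_exp.2 (by nlinarith)
      have h2 := mul_nonneg (neg_nonneg.2 (sub_nonpos.2 f1)) (neg_nonneg.2 (sub_nonpos.2 f2))
      rw [neg_mul_neg] at h2
      exact mul_nonneg htu h2
  -- outer integral
  have outer : (∫ t in a..b, ((t * Real.exp (-t*(s+d))) * hh a b 0
      - (t * Real.exp (-t*s)) * hh a b d - (t * Real.exp (-t*d)) * hh a b s
      + (t * Real.exp (-t*0)) * hh a b (s+d)))
      = 2 * (hh a b 0 * hh a b (s+d) - hh a b s * hh a b d) := by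
    rw [intervalIntegral.integral_add (((J (s+d) _).sub (J s _)).sub (J d _)) (J 0 _),
      intervalIntegral.integral_sub ((J (s+d) _).sub (J s _)) (J d _),
      intervalIntegral.integral_sub (J (s+d) _) (J s _),
      int_mul_const, int_mul_const, int_mul_const, int_mul_const]
    ring
  have hnn : (0:ℝ) ≤ ∫ t in a..b, ((t * Real.exp (-t*(s+d))) * hh a b 0
      - (t * Real.exp (-t*s)) * hh a b d - (t * Real.exp (-t*d)) * hh a b s
      + (t * Real.exp (-t*0)) * hh a b (s+d)) :=
    intervalIntegral.integral_nonneg hab.le hGnn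
  rw [outer] at hnn
  linarith

lemma hh_ratio {a b Δ : ℝ} (ha : 0 < a) (hab : a < b) (hΔ : 0 < Δ) {s s' : ℝ}
    (hs : 0 ≤ s) (hs' : 0 ≤ s') (hclose : s' - Δ ≤ s) :
    hh a b s * hh a b Δ ≤ hh a b 0 * hh a b s' := by
  rcases le_total s' Δ with h | h
  · have h1 : hh a b s ≤ hh a b 0 := hh_anti ha hab.le hs
    have h2 : hh a b s' ≤ hh a b 0 := hh_anti ha hab.le hs'
    have h3 : hh a b Δ ≤ hh a b s' := hh_anti ha hab.le h
    have p1 := hh_pos ha hab s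
    have p2 := hh_pos ha hab Δ
    nlinarith
  · have hu : 0 ≤ s' - Δ := by linarith
    have h1 : hh a b s ≤ hh a b (s' - Δ) := hh_anti ha hab.le hclose
    have h2 := hh_key ha hab hu hΔ.le
    rw [sub_add_cancel] at h2
    have p2 := hh_pos ha hab Δ
    nlinarith

lemma cont_g {a b : ℝ} (ha : 0 < a) (hab : a ≤ b) (m : ℝ) :
    Continuous fun y : ℝ => ∫ t in a..b, t * Real.exp (-t * |y - m|) := by
  simp only [intervalIntegral.integral_of_le hab]
  apply MeasureTheory.continuous_of_dominated (bound := fun _ : ℝ => b)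
  · intro y
    exact ((by continuity : Continuous fun t : ℝ => t * Real.exp (-t * |y - m|))).aestronglyMeasurable
  · intro y
    filter_upwards [ae_restrict_mem measurableSet_Ioc] with t ht
    have ht0 : 0 < t := lt_trans ha ht.1
    have he : Real.exp (-t * |y - m|) ≤ 1 := by
      apply Real.exp_le_one_iff.2
      have : 0 ≤ |y - m| := abs_nonneg _
      nlinarith
    rw [Real.norm_eq_abs, abs_mul, abs_of_pos ht0, abs_of_pos (Real.exp_pos _)]
    nlinarith [ht.2, Real.exp_pos (-t * |y - m|)]
  · exact integrableOn_const measure_Ioc_lt_top.ne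
  · apply ae_of_all
    intro t
    have : Continuous fun y : ℝ => -t * |y - m| := by continuity
    exact continuous_const.mul (Real.continuous_exp.comp this)

lemma integrable_exp_abs {c : ℝ} (hc : 0 < c) (m : ℝ) :
    Integrable fun y : ℝ => Real.exp (-(c * |y - m|)) := by
  have hIoi : IntegrableOn (fun y : ℝ => Real.exp (-(c * |y|))) (Ioi 0) := by
    apply (exp_neg_integrableOn_Ioi 0 hc).congr_fun ?_ measurableSet_Ioi
    intro y hy
    simp [abs_of_pos (mem_Ioi.1 hy)]
  have hIci : IntegrableOn (fun y : ℝ => Real.exp (-(c * |y|))) (Ici 0) :=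
    (integrableOn_Ici_iff_integrableOn_Ioi (by simp)).2 hIoi
  have hind : Integrable ((Ici (0:ℝ)).indicator fun y : ℝ => Real.exp (-(c * |y|))) :=
    (integrable_indicator_iff measurableSet_Ici).2 hIci
  have hneg := hind.comp_neg
  have heq : (fun y : ℝ => ((Ici (0:ℝ)).indicator fun y : ℝ => Real.exp (-(c * |y|))) (-y))
      = (Iic (0:ℝ)).indicator fun y : ℝ => Real.exp (-(c * |y|)) := by
    funext y
    by_cases hy : y ≤ 0
    · simp [Set.indicator_apply, hy, neg_nonneg, abs_neg]
    · simp [Set.indicator_apply, hy, neg_nonneg]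
  rw [heq] at hneg
  have hIic : IntegrableOn (fun y : ℝ => Real.exp (-(c * |y|))) (Iic 0) :=
    (integrable_indicator_iff measurableSet_Iic).1 hneg
  have hall : Integrable fun y : ℝ => Real.exp (-(c * |y|)) := by
    rw [← integrableOn_univ, ← Set.Iic_union_Ioi (a := (0:ℝ))]
    exact hIic.union hIoi
  exact hall.comp_sub_right m

lemma integrable_g {a b : ℝ} (ha : 0 < a) (hab : a < b) (m : ℝ) :
    Integrable fun y : ℝ => ∫ t in a..b, t * Real.exp (-t * |y - m|) := by
  apply Integrable.mono' ((integrable_exp_abs ha m).const_mul (hh a b 0))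
    (cont_g ha hab.le m).aestronglyMeasurable
  apply ae_of_all
  intro y
  have hnn : (0:ℝ) ≤ ∫ t in a..b, t * Real.exp (-t * |y - m|) := by
    apply intervalIntegral.integral_nonneg hab.le
    intro t ht
    have : 0 < t := lt_of_lt_of_le ha ht.1
    positivity
  rw [Real.norm_eq_abs, abs_of_nonneg hnn]
  have hmono : (∫ t in a..b, t * Real.exp (-t * |y - m|))
      ≤ ∫ t in a..b, t * Real.exp (-(a * |y - m|)) := by
    apply intervalIntegral.integral_mono_on hab.le (ii a b |y - m|)
      ((by continuity : Continuous fun t : ℝ => t * Real.exp (-(a * |y - m|))).intervalIntegrable _ _)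
    intro t ht
    have ht0 : 0 < t := lt_of_lt_of_le ha ht.1
    have habs : (0:ℝ) ≤ |y - m| := abs_nonneg _
    have : Real.exp (-t * |y - m|) ≤ Real.exp (-(a * |y - m|)) :=
      Real.exp_le_exp.2 (by nlinarith [ht.1])
    nlinarith [Real.exp_pos (-t * |y - m|)]
  have heval : (∫ t in a..b, t * Real.exp (-(a * |y - m|)))
      = hh a b 0 * Real.exp (-(a * |y - m|)) := by
    rw [← int_mul_const a b 0]
    apply intervalIntegral.integral_congr
    intro t _
    simp
  rw [heval] at hmono
  exact hmono

/-- The R²DP Laplace mechanism with uniformly distributed reciprocal scale on `[a, b]`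
satisfies `ln R`-differential privacy, where (with `α = a·Δ`, `β = b·Δ`)
`R = (β² - α²) / (2·((1 + α)·exp(-α) - (1 + β)·exp(-β)))`. -/
theorem r2dp_uniform_dp (a b Δ : ℝ) (ha : 0 < a) (hab : a < b) (hΔ : 0 < Δ)
    (m m' : ℝ) (hmm : |m - m'| ≤ Δ) (S : Set ℝ) (hS : MeasurableSet S) :
    (∫ y in S, (1 / (2 * (b - a))) * ∫ t in a..b, t * Real.exp (-t * |y - m|)) ≤
      ((b * Δ) ^ 2 - (a * Δ) ^ 2) /
          (2 * ((1 + a * Δ) * Real.exp (-(a * Δ)) - (1 + b * Δ) * Real.exp (-(b * Δ)))) *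
        ∫ y in S, (1 / (2 * (b - a))) * ∫ t in a..b, t * Real.exp (-t * |y - m'|) := by
  set R : ℝ := ((b * Δ) ^ 2 - (a * Δ) ^ 2) /
      (2 * ((1 + a * Δ) * Real.exp (-(a * Δ)) - (1 + b * Δ) * Real.exp (-(b * Δ)))) with hRdef
  have hhΔpos := hh_pos ha hab Δ
  have hE : (1 + a * Δ) * Real.exp (-(a * Δ)) - (1 + b * Δ) * Real.exp (-(b * Δ))
      = Δ ^ 2 * hh a b Δ := by
    rw [hh_closed hΔ.ne']
    field_simp
  have hR : R = hh a b 0 / hh a b Δ := by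
    rw [hRdef, hE, hh_zero]
    rw [div_eq_div_iff (by positivity) hhΔpos.ne']
    ring
  have hba : (0:ℝ) < b - a := sub_pos.2 hab
  have hC : (0:ℝ) ≤ 1 / (2 * (b - a)) := by positivity
  have hpt : ∀ y : ℝ, (1 / (2 * (b - a))) * (∫ t in a..b, t * Real.exp (-t * |y - m|))
      ≤ R * ((1 / (2 * (b - a))) * ∫ t in a..b, t * Real.exp (-t * |y - m'|)) := by
    intro y
    have hs : (0:ℝ) ≤ |y - m| := abs_nonneg _
    have hs' : (0:ℝ) ≤ |y - m'| := abs_nonneg _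
    have hclose : |y - m'| - Δ ≤ |y - m| := by
      have h1 := abs_sub_abs_le_abs_sub (y - m') (y - m)
      rw [show (y - m') - (y - m) = m - m' by ring] at h1
      linarith
    have hratio := hh_ratio ha hab hΔ hs hs' hclose
    have hmain : hh a b |y - m| ≤ R * hh a b |y - m'| := by
      rw [hR, div_mul_eq_mul_div, le_div_iff₀ hhΔpos]
      exact hratio
    have h2 := mul_le_mul_of_nonneg_left hmain hC
    show (1 / (2 * (b - a))) * hh a b |y - m| ≤ R * ((1 / (2 * (b - a))) * hh a b |y - m'|)
    rw [show R * ((1 / (2 * (b - a))) * hh a b |y - m'|)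
        = (1 / (2 * (b - a))) * (R * hh a b |y - m'|) by ring]
    exact h2
  have hf : Integrable (fun y : ℝ => (1 / (2 * (b - a))) *
      ∫ t in a..b, t * Real.exp (-t * |y - m|)) := (integrable_g ha hab m).const_mul _
  have hg' : Integrable (fun y : ℝ => R * ((1 / (2 * (b - a))) *
      ∫ t in a..b, t * Real.exp (-t * |y - m'|))) :=
    (((integrable_g ha hab m').const_mul _).const_mul _)
  calc (∫ y in S, (1 / (2 * (b - a))) * ∫ t in a..b, t * Real.exp (-t * |y - m|))
      ≤ ∫ y in S, R * ((1 / (2 * (b - a))) * ∫ t in a..b, t * Real.exp (-t * |y - m'|)) :=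
        MeasureTheory.integral_mono hf.restrict hg'.restrict hpt
    _ = R * ∫ y in S, (1 / (2 * (b - a))) * ∫ t in a..b, t * Real.exp (-t * |y - m'|) :=
        MeasureTheory.integral_const_mul R _
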